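/- Let K be a field and D = K[x] the polynomial ring in one variable. Then the reciprocal complement R(D) equals the set of fractions f/g with f, g ∈ K[x], g ≠ 0, and deg(f) ≤ deg(g). -/

import Mathlib

noncomputable def recip (D : Type*) [CommRing D] [IsDomain D] : Subring (FractionRing D) :=
  Subring.closure {x | ∃ d : D, d ≠ 0 ∧ x = (algebraMap D (FractionRing D) d)⁻¹}

namespace RecipAux

open Polynomial

variable {K : Type*} [Field K]

local notation "φ" => algebraMap (Polynomial K) (FractionRing (Polynomial K))

lemma phi_ne_zero {g : Polynomial K} (hg : g ≠ 0) : φ g ≠ 0 :=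
  (map_ne_zero_iff _ (IsFractionRing.injective _ _)).mpr hg

lemma inv_mem' {d : Polynomial K} (hd : d ≠ 0) : (φ d)⁻¹ ∈ recip (Polynomial K) :=
  Subring.subset_closure ⟨d, hd, rfl⟩

lemma C_inv (c : K) : (φ (C c))⁻¹ = φ (C c⁻¹) := by
  by_cases hc : c = 0
  · simp [hc]
  · refine inv_eq_of_mul_eq_one_right ?_
    rw [← map_mul, ← C_mul, mul_inv_cancel₀ hc, map_one, map_one]

lemma C_mem (c : K) : φ (C c) ∈ recip (Polynomial K) := by
  by_cases hc : c = 0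
  · simp only [hc, map_zero]; exact zero_mem _
  · have : (φ (C c⁻¹))⁻¹ = φ (C c) := by rw [C_inv, inv_inv]
    rw [← this]
    exact inv_mem' (by simp [hc])

lemma xpow_div_mem : ∀ i : ℕ, ∀ g : Polynomial K, g ≠ 0 → i ≤ g.natDegree →
    φ (X ^ i) * (φ g)⁻¹ ∈ recip (Polynomial K) := by
  intro i
  induction i using Nat.strong_induction_on with
  | _ i IH =>
    intro g hg hi
    set n := g.natDegree with hn
    set ℓ := g.leadingCoeff with hℓdef
    have hℓ : ℓ ≠ 0 := leadingCoeff_ne_zero.mpr hg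
    set r := g.eraseLead with hrdef
    have hgr : r + C ℓ * X ^ n = g := eraseLead_add_C_mul_X_pow g
    have hXni : (X : Polynomial K) ^ (n - i) ≠ 0 := pow_ne_zero _ X_ne_zero
    have hφg : φ g ≠ 0 := phi_ne_zero hg
    have hφX : φ (X ^ (n - i)) ≠ 0 := phi_ne_zero hXni
    -- B := r / (g * X^(n-i))
    have hB : φ r * ((φ g)⁻¹ * (φ (X ^ (n - i)))⁻¹) ∈ recip (Polynomial K) := by
      have expand : φ r = ∑ j ∈ r.support, φ ((monomial j) (r.coeff j)) := by
        conv_lhs => rw [r.as_sum_support]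
        rw [map_sum]
      rw [expand, Finset.sum_mul]
      refine sum_mem fun j hj => ?_
      have hjn : j < n := by
        have h1 : j ∈ g.support.erase n := by rwa [← eraseLead_support]
        have h2 : j ≠ n := (Finset.mem_erase.mp h1).1
        have h3 : j ≤ n := le_natDegree_of_mem_supp j (Finset.mem_erase.mp h1).2
        omega
      have hc : r.coeff j ≠ 0 := mem_support_iff.mp hj
      by_cases hcase : j ≤ n - i
      · -- reciprocal of C (c⁻¹) * g * X^(n-i-j)
        have key : φ ((monomial j) (r.coeff j)) * ((φ g)⁻¹ * (φ (X ^ (n - i)))⁻¹)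
            = (φ (C (r.coeff j)⁻¹ * g * X ^ (n - i - j)))⁻¹ := by
          rw [← C_mul_X_pow_eq_monomial]
          have hsplit : (X : Polynomial K) ^ (n - i) = X ^ j * X ^ (n - i - j) := by
            rw [← pow_add]; congr 1; omega
          rw [hsplit]
          rw [map_mul, map_mul, map_mul, map_mul, mul_inv, mul_inv, mul_inv, C_inv, inv_inv]
          have hXj : φ (X ^ j) ≠ 0 := phi_ne_zero (pow_ne_zero _ X_ne_zero)
          field_simp
        rw [key]
        refine inv_mem' (by
          refine mul_ne_zero (mul_ne_zero ?_ hg) (pow_ne_zero _ X_ne_zero)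
          simpa using inv_ne_zero hc)
      · -- use IH with exponent j - (n - i) < i
        have hlt : j - (n - i) < i := by omega
        have hle : j - (n - i) ≤ g.natDegree := by omega
        have key : φ ((monomial j) (r.coeff j)) * ((φ g)⁻¹ * (φ (X ^ (n - i)))⁻¹)
            = φ (C (r.coeff j)) * (φ (X ^ (j - (n - i))) * (φ g)⁻¹) := by
          rw [← C_mul_X_pow_eq_monomial]
          have hsplit : (X : Polynomial K) ^ j = X ^ (j - (n - i)) * X ^ (n - i) := by
            rw [← pow_add]; congr 1; omega
          rw [hsplit]
          rw [map_mul, map_mul]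
          field_simp
        rw [key]
        exact mul_mem (C_mem _) (IH _ hlt g hg hle)
    have main : φ (X ^ i) * (φ g)⁻¹
        = φ (C ℓ⁻¹) * ((φ (X ^ (n - i)))⁻¹ - φ r * ((φ g)⁻¹ * (φ (X ^ (n - i)))⁻¹)) := by
      rw [← C_inv]
      have hφCℓ : φ (C ℓ) ≠ 0 := phi_ne_zero (by simp [hℓ])
      have hpow : (φ X) ^ i * (φ X) ^ (n - i) = (φ X) ^ n := by
        rw [← pow_add]; congr 1; omega
      have hGR : φ g - φ r = φ (C ℓ) * (φ X) ^ n := by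
        rw [← hgr, map_add, map_mul, map_pow]; ring
      simp only [map_pow] at hφX ⊢
      linear_combination (-(φ X ^ i * (φ g)⁻¹)) * mul_inv_cancel₀ hφCℓ
        - φ X ^ i * (φ g)⁻¹ * (φ (C ℓ))⁻¹ * φ (C ℓ) * mul_inv_cancel₀ hφX
        + (φ (C ℓ))⁻¹ * φ (C ℓ) * ((φ X) ^ (n - i))⁻¹ * (φ g)⁻¹ * hpow
        + (φ (C ℓ))⁻¹ * ((φ X) ^ (n - i))⁻¹ * mul_inv_cancel₀ hφg
        - (φ (C ℓ))⁻¹ * ((φ X) ^ (n - i))⁻¹ * (φ g)⁻¹ * hGR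
    rw [main]
    exact mul_mem (C_mem _) (sub_mem (inv_mem' hXni) hB)

lemma div_mem' (f g : Polynomial K) (hg : g ≠ 0) (hfg : f.degree ≤ g.degree) :
    φ f * (φ g)⁻¹ ∈ recip (Polynomial K) := by
  have expand : φ f = ∑ j ∈ f.support, φ ((monomial j) (f.coeff j)) := by
    conv_lhs => rw [f.as_sum_support]
    rw [map_sum]
  rw [expand, Finset.sum_mul]
  refine sum_mem fun j hj => ?_
  have hjf : j ≤ f.natDegree := le_natDegree_of_mem_supp j hj
  have hjg : j ≤ g.natDegree := hjf.trans (natDegree_le_natDegree hfg)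
  have key : φ ((monomial j) (f.coeff j)) * (φ g)⁻¹
      = φ (C (f.coeff j)) * (φ (X ^ j) * (φ g)⁻¹) := by
    rw [← C_mul_X_pow_eq_monomial, map_mul]; ring
  rw [key]
  exact mul_mem (C_mem _) (xpow_div_mem j g hg hjg)

end RecipAux

/-- For `D = K[x]`, the reciprocal complement `R(D)` is the set of
fractions `f/g` with `g ≠ 0` and `deg f ≤ deg g`. -/
theorem stmt_3 (K : Type*) [Field K] :
    (recip (Polynomial K) : Set (FractionRing (Polynomial K))) =
      {x | ∃ f g : Polynomial K, g ≠ 0 ∧ f.degree ≤ g.degree ∧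
        x = algebraMap (Polynomial K) (FractionRing (Polynomial K)) f /
            algebraMap (Polynomial K) (FractionRing (Polynomial K)) g} := by
  classical
  let φ := algebraMap (Polynomial K) (FractionRing (Polynomial K))
  have hφ : ∀ {g : Polynomial K}, g ≠ 0 → φ g ≠ 0 := fun hg => RecipAux.phi_ne_zero hg
  apply Set.Subset.antisymm
  · -- recip ⊆ RHS : RHS is a subring containing the generators
    let S : Subring (FractionRing (Polynomial K)) :=
      { carrier := {x | ∃ f g : Polynomial K, g ≠ 0 ∧ f.degree ≤ g.degree ∧
          x = φ f / φ g}
        one_mem' := ⟨1, 1, one_ne_zero, le_refl _, by simp⟩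
        zero_mem' := ⟨0, 1, one_ne_zero, by simp, by simp⟩
        mul_mem' := by
          rintro x y ⟨f1, g1, hg1, hd1, rfl⟩ ⟨f2, g2, hg2, hd2, rfl⟩
          refine ⟨f1 * f2, g1 * g2, mul_ne_zero hg1 hg2, ?_, ?_⟩
          · rw [Polynomial.degree_mul, Polynomial.degree_mul]
            exact add_le_add hd1 hd2
          · rw [map_mul, map_mul, div_mul_div_comm]
        add_mem' := by
          rintro x y ⟨f1, g1, hg1, hd1, rfl⟩ ⟨f2, g2, hg2, hd2, rfl⟩
          refine ⟨f1 * g2 + g1 * f2, g1 * g2, mul_ne_zero hg1 hg2, ?_, ?_⟩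
          · refine (Polynomial.degree_add_le _ _).trans (max_le ?_ ?_)
            · rw [Polynomial.degree_mul, Polynomial.degree_mul]
              exact add_le_add_left hd1 _
            · rw [Polynomial.degree_mul, Polynomial.degree_mul]
              exact add_le_add_right hd2 _
          · rw [map_add, map_mul, map_mul, map_mul]
            rw [div_add_div _ _ (hφ hg1) (hφ hg2)]
        neg_mem' := by
          rintro x ⟨f, g, hg, hd, rfl⟩
          exact ⟨-f, g, hg, (Polynomial.degree_neg f) ▸ hd, by rw [map_neg, neg_div]⟩ }
    have hle : recip (Polynomial K) ≤ S := by
      rw [recip, Subring.closure_le]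
      rintro x ⟨d, hd, rfl⟩
      exact ⟨1, d, hd, by simpa using Polynomial.zero_le_degree_iff.mpr hd, by
        rw [map_one, one_div]⟩
    exact fun x hx => hle hx
  · rintro x ⟨f, g, hg, hfg, rfl⟩
    rw [div_eq_mul_inv]
    exact RecipAux.div_mem' f g hg hfg
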